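/- arXiv:1002.1986 — 2 statements merged into one kernel-verified Lean document; each statement's English description precedes it below -/
import Mathlib

section
/- Averaging lemma (Lemma 5.1 of the paper): Let d ≥ 1, let (p_k)_{k∈ℤ^d} be complex numbers with Σ_{k∈ℤ^d} |p_k| < ∞, and let p : ℝ^d → ℂ be the 1-periodic function p(x) = Σ_{k∈ℤ^d} p_k e^{2πi k·x}. Let G : ℝ^d → ℂ be a Schwartz function. Then for every natural number q ≥ 1 there exists a constant C = C(G,q,d) > 0 such that for all 0 < ε ≤ 1, | ε^d ∫_{ℝ^d} p(x) G(εx) dx − p_0 ∫_{ℝ^d} G(y) dy | ≤ C ε^q Σ_{k∈ℤ^d, k≠0} |p_k|, where p_0 is the Fourier coefficient of frequency k = 0 (i.e. the average of p over its period cell). -/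
open MeasureTheory Complex Real FourierTransform

noncomputable def fourAux {d : ℕ} (G : SchwartzMap (Fin d → ℝ) ℂ) (ξ : Fin d → ℝ) : ℂ :=
  ∫ y : Fin d → ℝ, Complex.exp (2 * Real.pi * Complex.I * ((∑ i, ξ i * y i : ℝ) : ℂ)) * G y

lemma norm_exp_two_pi (r : ℝ) : ‖Complex.exp (2 * Real.pi * Complex.I * (r : ℂ))‖ = 1 := by
  rw [Complex.norm_exp]
  simp [Complex.mul_re, Complex.mul_im]

lemma cont_exp_two_pi {d : ℕ} (ξ : Fin d → ℝ) :
    Continuous fun x : Fin d → ℝ =>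
      Complex.exp (2 * Real.pi * Complex.I * ((∑ i, ξ i * x i : ℝ) : ℂ)) := by
  apply Complex.continuous_exp.comp
  apply continuous_const.mul
  apply Complex.continuous_ofReal.comp
  exact continuous_finset_sum _ fun i _ => continuous_const.mul (continuous_apply i)

lemma fourAux_zero {d : ℕ} (G : SchwartzMap (Fin d → ℝ) ℂ) : fourAux G 0 = ∫ y, G y := by
  unfold fourAux
  simp

lemma norm_fourAux_le {d : ℕ} (G : SchwartzMap (Fin d → ℝ) ℂ) (ξ : Fin d → ℝ) :
    ‖fourAux G ξ‖ ≤ ∫ y : Fin d → ℝ, ‖G y‖ := by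
  refine (norm_integral_le_integral_norm _).trans (le_of_eq ?_)
  apply integral_congr_ae
  filter_upwards with y
  rw [norm_mul, norm_exp_two_pi, one_mul]

lemma integrable_exp_mul {d : ℕ} (G : SchwartzMap (Fin d → ℝ) ℂ) (ξ : Fin d → ℝ)
    {ε : ℝ} (hε : ε ≠ 0) :
    Integrable (fun x : Fin d → ℝ =>
      Complex.exp (2 * Real.pi * Complex.I * ((∑ i, ξ i * x i : ℝ) : ℂ)) * G (ε • x)) := by
  apply Integrable.bdd_mul (G.integrable.comp_smul hε)
    (cont_exp_two_pi ξ).aestronglyMeasurable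
  exact Filter.Eventually.of_forall fun x => le_of_eq (norm_exp_two_pi _)

lemma scaling {d : ℕ} (G : SchwartzMap (Fin d → ℝ) ℂ) (k : Fin d → ℤ)
    {ε : ℝ} (hε : 0 < ε) :
    ∫ x : Fin d → ℝ, Complex.exp (2 * Real.pi * Complex.I *
        ((∑ i, (k i : ℝ) * x i : ℝ) : ℂ)) * G (ε • x)
      = ((ε ^ d)⁻¹ : ℝ) • fourAux G (ε⁻¹ • fun i => (k i : ℝ)) := by
  have h := Measure.integral_comp_smul (μ := volume)
    (f := fun y : Fin d → ℝ => Complex.exp (2 * Real.pi * Complex.I *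
      ((∑ i, (ε⁻¹ * (k i : ℝ)) * y i : ℝ) : ℂ)) * G y) ε
  have hfr : Module.finrank ℝ (Fin d → ℝ) = d := by
    simp [Module.finrank_pi]
  rw [hfr] at h
  have habs : |(ε ^ d)⁻¹| = (ε ^ d)⁻¹ := abs_of_nonneg (by positivity)
  rw [habs] at h
  have heq : (fun x : Fin d → ℝ => Complex.exp (2 * Real.pi * Complex.I *
      ((∑ i, (ε⁻¹ * (k i : ℝ)) * (ε • x) i : ℝ) : ℂ)) * G (ε • x))
      = fun x : Fin d → ℝ => Complex.exp (2 * Real.pi * Complex.I *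
      ((∑ i, (k i : ℝ) * x i : ℝ) : ℂ)) * G (ε • x) := by
    funext x
    have hsum : (∑ i, (ε⁻¹ * (k i : ℝ)) * (ε • x) i) = ∑ i, (k i : ℝ) * x i := by
      apply Finset.sum_congr rfl
      intro i _
      have : (ε • x) i = ε * x i := rfl
      rw [this]
      field_simp
    rw [hsum]
  rw [heq] at h
  rw [h]
  rfl

lemma fourAux_eq {d : ℕ} (G : SchwartzMap (Fin d → ℝ) ℂ) (ξ : Fin d → ℝ) :
    fourAux G ξ = 𝓕 (⇑(SchwartzMap.compCLMOfContinuousLinearEquiv ℝ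
      (EuclideanSpace.equiv (Fin d) ℝ) G))
      (-(EuclideanSpace.equiv (Fin d) ℝ).symm ξ) := by
  rw [Real.fourier_eq']
  rw [← ((EuclideanSpace.volume_preserving_symm_measurableEquiv_toLp (Fin d)).symm).integral_comp
      (MeasurableEquiv.toLp 2 (Fin d → ℝ)).symm.symm.measurableEmbedding]
  unfold fourAux
  congr 1
  ext y
  rw [smul_eq_mul]
  congr 1
  have hin : (inner ℝ ((MeasurableEquiv.toLp 2 (Fin d → ℝ)).symm.symm y)
      (-(EuclideanSpace.equiv (Fin d) ℝ).symm ξ) : ℝ) = -∑ i, ξ i * y i := by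
    simp only [inner_neg_right, PiLp.inner_apply, RCLike.inner_apply, conj_trivial, neg_inj]
    exact Finset.sum_congr rfl fun i _ => by simp [MeasurableEquiv.coe_toLp, EuclideanSpace.equiv, mul_comm]
  rw [hin]
  push_cast
  ring

-- coordinate bound in EuclideanSpace
lemma coord_le_norm {d : ℕ} (x : EuclideanSpace ℝ (Fin d)) (i : Fin d) : |x i| ≤ ‖x‖ := by
  rw [EuclideanSpace.norm_eq]
  rw [← Real.sqrt_sq_eq_abs (x i)]
  apply Real.sqrt_le_sqrt
  have : x i ^ 2 = ‖x i‖ ^ 2 := by rw [Real.norm_eq_abs]; exact (_root_.sq_abs _).symm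
  rw [this]
  exact Finset.single_le_sum (f := fun j => ‖x j‖ ^ 2) (fun j _ => sq_nonneg _) (Finset.mem_univ i)

lemma fourAux_decay {d : ℕ} (G : SchwartzMap (Fin d → ℝ) ℂ) (q : ℕ) :
    ∃ C : ℝ, 0 < C ∧ ∀ (R : ℝ), 1 ≤ R → ∀ ξ : Fin d → ℝ, (∃ i, R ≤ |ξ i|) →
      ‖fourAux G ξ‖ * R ^ q ≤ C := by
  set G' := SchwartzMap.compCLMOfContinuousLinearEquiv ℝ (EuclideanSpace.equiv (Fin d) ℝ) G
  set Gh := SchwartzMap.fourierTransformCLM ℝ G'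
  obtain ⟨C, hC0, hC⟩ := Gh.decay q 0
  refine ⟨C, hC0, fun R hR ξ ⟨i, hi⟩ => ?_⟩
  rw [fourAux_eq]
  set w : EuclideanSpace ℝ (Fin d) := -(EuclideanSpace.equiv (Fin d) ℝ).symm ξ
  have hw : R ≤ ‖w‖ := by
    refine hi.trans (le_trans ?_ (coord_le_norm w i))
    have : w i = -ξ i := rfl
    rw [this, abs_neg]
  have hGh : (Gh : EuclideanSpace ℝ (Fin d) → ℂ) w = 𝓕 (⇑G') w := by
    simp [Gh, SchwartzMap.fourier_coe]
  have := hC w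
  rw [norm_iteratedFDeriv_zero, hGh] at this
  have hRq : R ^ q ≤ ‖w‖ ^ q := pow_le_pow_left₀ (le_trans zero_le_one hR) hw q
  calc ‖𝓕 (⇑G') w‖ * R ^ q ≤ ‖𝓕 (⇑G') w‖ * ‖w‖ ^ q := by
        exact mul_le_mul_of_nonneg_left hRq (norm_nonneg _)
    _ = ‖w‖ ^ q * ‖𝓕 (⇑G') w‖ := mul_comm _ _
    _ ≤ C := this

/-- Averaging lemma (Lemma 5.1): for a 1-periodic function `p` with absolutely summable
Fourier coefficients `c k`, and a Schwartz function `G`, the rescaled integral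
`ε^d ∫ p(x) G(εx) dx` converges to `p₀ ∫ G` faster than any power of `ε`. -/
theorem averaging_lemma (d : ℕ) (hd : 1 ≤ d) (c : (Fin d → ℤ) → ℂ)
    (hc : Summable fun k => ‖c k‖)
    (p : (Fin d → ℝ) → ℂ)
    (hp : ∀ x : Fin d → ℝ, p x = ∑' k : Fin d → ℤ,
      c k * Complex.exp (2 * Real.pi * Complex.I * ((∑ i, (k i : ℝ) * x i : ℝ) : ℂ)))
    (G : SchwartzMap (Fin d → ℝ) ℂ) (q : ℕ) (hq : 1 ≤ q) :
    ∃ C : ℝ, 0 < C ∧ ∀ ε : ℝ, 0 < ε → ε ≤ 1 →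
      ‖((ε : ℂ) ^ d * ∫ x : Fin d → ℝ, p x * G (ε • x)) -
          c 0 * ∫ y : Fin d → ℝ, G y‖ ≤
        C * ε ^ q * ∑' k : Fin d → ℤ, (if k = 0 then 0 else ‖c k‖) := by
  obtain ⟨C₀, hC₀, hdec⟩ := fourAux_decay G q
  refine ⟨C₀, hC₀, fun ε hε hε1 => ?_⟩
  have hεne : ε ≠ 0 := ne_of_gt hε
  set M : ℝ := ∫ y : Fin d → ℝ, ‖G y‖ with hM
  -- notation
  set F : (Fin d → ℤ) → ℂ := fun k => fourAux G (ε⁻¹ • fun i => (k i : ℝ)) with hF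
  -- step 1: interchange sum and integral
  have hInt : ∀ k : Fin d → ℤ, Integrable (fun x : Fin d → ℝ =>
      c k * Complex.exp (2 * Real.pi * Complex.I * ((∑ i, (k i : ℝ) * x i : ℝ) : ℂ))
        * G (ε • x)) := by
    intro k
    exact ((integrable_exp_mul G (fun i => (k i : ℝ)) hεne).const_mul (c k)).congr
      (Filter.Eventually.of_forall fun x => (mul_assoc _ _ _).symm)
  have hnormint : ∀ k : Fin d → ℤ, (∫ x : Fin d → ℝ,
      ‖c k * Complex.exp (2 * Real.pi * Complex.I * ((∑ i, (k i : ℝ) * x i : ℝ) : ℂ))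
        * G (ε • x)‖) = ‖c k‖ * ∫ x : Fin d → ℝ, ‖G (ε • x)‖ := by
    intro k
    rw [← integral_const_mul]
    apply integral_congr_ae
    filter_upwards with x
    rw [norm_mul, norm_mul, norm_exp_two_pi, mul_one]
  have hSum : Summable fun k : Fin d → ℤ => ∫ x : Fin d → ℝ,
      ‖c k * Complex.exp (2 * Real.pi * Complex.I * ((∑ i, (k i : ℝ) * x i : ℝ) : ℂ))
        * G (ε • x)‖ :=
    (hc.mul_right (∫ x : Fin d → ℝ, ‖G (ε • x)‖)).congr fun k => (hnormint k).symm
  have hI : (∫ x : Fin d → ℝ, p x * G (ε • x)) = ∑' k : Fin d → ℤ, ∫ x : Fin d → ℝ,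
      c k * Complex.exp (2 * Real.pi * Complex.I * ((∑ i, (k i : ℝ) * x i : ℝ) : ℂ))
        * G (ε • x) := by
    rw [integral_tsum_of_summable_integral_norm hInt hSum]
    apply integral_congr_ae
    filter_upwards with x
    rw [hp x, tsum_mul_right]
  -- step 2: each term via scaling
  have hterm : ∀ k : Fin d → ℤ, (∫ x : Fin d → ℝ,
      c k * Complex.exp (2 * Real.pi * Complex.I * ((∑ i, (k i : ℝ) * x i : ℝ) : ℂ))
        * G (ε • x)) = c k * (((ε ^ d)⁻¹ : ℝ) • F k) := by
    intro k
    have h2 : (∫ x : Fin d → ℝ,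
        c k * Complex.exp (2 * Real.pi * Complex.I * ((∑ i, (k i : ℝ) * x i : ℝ) : ℂ))
          * G (ε • x)) = c k * ∫ x : Fin d → ℝ,
        Complex.exp (2 * Real.pi * Complex.I * ((∑ i, (k i : ℝ) * x i : ℝ) : ℂ))
          * G (ε • x) := by
      rw [← integral_const_mul]
      apply integral_congr_ae
      filter_upwards with x
      ring
    rw [h2, scaling G k hε]
  have hεC : ((ε : ℂ)) ^ d ≠ 0 := pow_ne_zero _ (by exact_mod_cast hεne)
  have key : (ε : ℂ) ^ d * ∫ x : Fin d → ℝ, p x * G (ε • x)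
      = ∑' k : Fin d → ℤ, c k * F k := by
    rw [hI]
    simp_rw [hterm]
    rw [← tsum_mul_left]
    apply tsum_congr
    intro k
    rw [Complex.real_smul]
    push_cast
    field_simp
  rw [key]
  -- F 0 = ∫ G
  have hF0 : F 0 = ∫ y : Fin d → ℝ, G y := by
    have : (ε⁻¹ • fun i : Fin d => ((0 : Fin d → ℤ) i : ℝ)) = (0 : Fin d → ℝ) := by
      funext i; simp
    rw [hF]
    simp only [this]
    exact fourAux_zero G
  -- summability of c k * F k
  have hFle : ∀ k, ‖F k‖ ≤ M := fun k => norm_fourAux_le G _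
  have hMnonneg : 0 ≤ M := integral_nonneg fun y => norm_nonneg _
  have hsum2 : Summable fun k : Fin d → ℤ => c k * F k := by
    apply Summable.of_norm_bounded (hc.mul_right M)
    intro k
    rw [norm_mul]
    exact mul_le_mul_of_nonneg_left (hFle k) (norm_nonneg _)
  have hsplit : ∑' k : Fin d → ℤ, c k * F k
      = c 0 * F 0 + ∑' k : Fin d → ℤ, (if k = 0 then 0 else c k * F k) :=
    hsum2.tsum_eq_add_tsum_ite 0
  rw [hsplit, hF0, add_sub_cancel_left]
  -- termwise bound for nonzero k
  have hR1 : (1 : ℝ) ≤ ε⁻¹ := (one_le_inv₀ hε).2 hε1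
  have hbound : ∀ k : Fin d → ℤ, k ≠ 0 → ‖F k‖ ≤ C₀ * ε ^ q := by
    intro k hk
    obtain ⟨i, hi⟩ := Function.ne_iff.1 hk
    have hcoord : ε⁻¹ ≤ |(ε⁻¹ • fun j : Fin d => ((k j : ℝ))) i| := by
      have : ((ε⁻¹ • fun j : Fin d => ((k j : ℝ))) i) = ε⁻¹ * (k i : ℝ) := rfl
      rw [this, abs_mul, abs_of_pos (inv_pos.2 hε)]
      have h1 : (1 : ℝ) ≤ |(k i : ℝ)| := by
        rw [← Int.cast_abs]
        exact_mod_cast Int.one_le_abs (by simpa using hi)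
      nlinarith [inv_pos.2 hε]
    have hd2 := hdec ε⁻¹ hR1 _ ⟨i, hcoord⟩
    have hpow : (0 : ℝ) < (ε⁻¹) ^ q := by positivity
    rw [← le_div_iff₀ hpow] at hd2
    calc ‖F k‖ ≤ C₀ / (ε⁻¹) ^ q := hd2
      _ = C₀ * ε ^ q := by rw [inv_pow]; field_simp
  -- assemble
  set g : (Fin d → ℤ) → ℂ := fun k => if k = 0 then 0 else c k * F k with hg
  have hgle : ∀ k, ‖g k‖ ≤ (C₀ * ε ^ q) * (if k = 0 then 0 else ‖c k‖) := by
    intro k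
    rw [hg]
    by_cases h : k = 0
    · simp [h]
    · simp only [if_neg h]
      rw [norm_mul, mul_comm]
      exact mul_le_mul_of_nonneg_right (hbound k h) (norm_nonneg _)
  have hsumite : Summable fun k : Fin d → ℤ => (if k = 0 then 0 else ‖c k‖) := by
    apply Summable.of_nonneg_of_le (fun k => ?_) (fun k => ?_) hc
    · split <;> simp [norm_nonneg]
    · split <;> simp [norm_nonneg]
  have hsumh : Summable fun k : Fin d → ℤ =>
      (C₀ * ε ^ q) * (if k = 0 then 0 else ‖c k‖) := hsumite.mul_left _
  have hsumg : Summable fun k => ‖g k‖ :=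
    Summable.of_nonneg_of_le (fun k => norm_nonneg _) hgle hsumh
  calc ‖∑' k, g k‖ ≤ ∑' k, ‖g k‖ := norm_tsum_le_tsum_norm hsumg
    _ ≤ ∑' k, (C₀ * ε ^ q) * (if k = 0 then 0 else ‖c k‖) := Summable.tsum_le_tsum hgle hsumg hsumh
    _ = (C₀ * ε ^ q) * ∑' k, (if k = 0 then 0 else ‖c k‖) := tsum_mul_left
    _ = C₀ * ε ^ q * ∑' k, (if k = 0 then 0 else ‖c k‖) := by ring
end

section
/- Explicit quintic-term integral of the quintic Townes soliton (Appendix D): Let R(y) := 3^{1/4} (sech(2y))^{1/2}, the positive solution of −R'' + R − R⁵ = 0 on ℝ, and let G(y) := −(1/2)(R(y)/2 + y R'(y)). Then ∫_ℝ (d²/dy²)(R(y)⁵) · G(y) dy = (13√3/16) π. Equivalently, ∫_ℝ (R⁵)''(y) (R(y)/2 + y R'(y)) dy = −(13√3/8) π. -/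
open Real MeasureTheory Filter Set Topology

noncomputable def tH (y : ℝ) : ℝ :=
  15 * Real.sqrt 3 / 2 *
    (-(5 / 2) / Real.cosh (2 * y) ^ 3 + 7 / 2 / Real.cosh (2 * y) ^ 5
      + 5 * y * Real.sinh (2 * y) / Real.cosh (2 * y) ^ 4
      - 7 * y * Real.sinh (2 * y) / Real.cosh (2 * y) ^ 6)

noncomputable def tPhi (y : ℝ) : ℝ :=
  13 * Real.sqrt 3 / 16 *
      (Real.sinh (2 * y) / Real.cosh (2 * y) ^ 2 + Real.arctan (Real.sinh (2 * y)))
    + 21 * Real.sqrt 3 / 8 * (Real.sinh (2 * y) / Real.cosh (2 * y) ^ 4)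
    - 25 * Real.sqrt 3 / 4 * (y / Real.cosh (2 * y) ^ 3)
    + 21 * Real.sqrt 3 / 4 * (y / Real.cosh (2 * y) ^ 5)

lemma hasDerivAt_cosh2 (y : ℝ) :
    HasDerivAt (fun z => Real.cosh (2 * z)) (2 * Real.sinh (2 * y)) y := by
  have h2 : HasDerivAt (fun z : ℝ => 2 * z) 2 y := by
    simpa using (hasDerivAt_id y).const_mul (2 : ℝ)
  simpa [Function.comp_def, mul_comm] using (Real.hasDerivAt_cosh (2 * y)).comp y h2

lemma hasDerivAt_sinh2 (y : ℝ) :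
    HasDerivAt (fun z => Real.sinh (2 * z)) (2 * Real.cosh (2 * y)) y := by
  have h2 : HasDerivAt (fun z : ℝ => 2 * z) 2 y := by
    simpa using (hasDerivAt_id y).const_mul (2 : ℝ)
  simpa [Function.comp_def, mul_comm] using (Real.hasDerivAt_sinh (2 * y)).comp y h2

lemma tPhi_hasDerivAt (y : ℝ) : HasDerivAt tPhi (tH y) y := by
  have hc : (0:ℝ) < Real.cosh (2 * y) := Real.cosh_pos _
  have hcne : Real.cosh (2 * y) ≠ 0 := hc.ne'
  have hdc := hasDerivAt_cosh2 y
  have hds := hasDerivAt_sinh2 y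
  have key : Real.sinh (2 * y) ^ 2 = Real.cosh (2 * y) ^ 2 - 1 := Real.sinh_sq _
  have hp : ∀ n : ℕ, HasDerivAt (fun z => Real.cosh (2 * z) ^ n)
      ((n : ℝ) * Real.cosh (2 * y) ^ (n - 1) * (2 * Real.sinh (2 * y))) y := fun n => hdc.pow n
  have t1 : HasDerivAt (fun z => Real.sinh (2 * z) / Real.cosh (2 * z) ^ 2)
      (-2 / Real.cosh (2 * y) + 4 / Real.cosh (2 * y) ^ 3) y := by
    refine (hds.div (hp 2) (pow_ne_zero _ hcne)).congr_deriv ?_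
    symm
    field_simp
    linear_combination (4 * Real.cosh (2*y)) * key
  have t2 : HasDerivAt (fun z => Real.arctan (Real.sinh (2 * z))) (2 / Real.cosh (2 * y)) y := by
    refine ((Real.hasDerivAt_arctan (Real.sinh (2 * y))).comp y hds).congr_deriv ?_
    symm
    rw [← Real.cosh_sq' (2 * y)]
    field_simp
  have t3 : HasDerivAt (fun z => Real.sinh (2 * z) / Real.cosh (2 * z) ^ 4)
      (-6 / Real.cosh (2 * y) ^ 3 + 8 / Real.cosh (2 * y) ^ 5) y := by
    refine (hds.div (hp 4) (pow_ne_zero _ hcne)).congr_deriv ?_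
    symm
    field_simp
    linear_combination (8 * Real.cosh (2*y)^3) * key
  have t4 : HasDerivAt (fun z => z / Real.cosh (2 * z) ^ 3)
      (1 / Real.cosh (2 * y) ^ 3 - 6 * y * Real.sinh (2 * y) / Real.cosh (2 * y) ^ 4) y := by
    refine ((hasDerivAt_id y).div (hp 3) (pow_ne_zero _ hcne)).congr_deriv ?_
    symm
    field_simp
    simp only [id_eq]
    ring
  have t5 : HasDerivAt (fun z => z / Real.cosh (2 * z) ^ 5)
      (1 / Real.cosh (2 * y) ^ 5 - 10 * y * Real.sinh (2 * y) / Real.cosh (2 * y) ^ 6) y := by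
    refine ((hasDerivAt_id y).div (hp 5) (pow_ne_zero _ hcne)).congr_deriv ?_
    symm
    field_simp
    simp only [id_eq]
    ring
  have h := ((((t1.add t2).const_mul (13 * Real.sqrt 3 / 16)).add
      (t3.const_mul (21 * Real.sqrt 3 / 8))).sub
      (t4.const_mul (25 * Real.sqrt 3 / 4))).add
      (t5.const_mul (21 * Real.sqrt 3 / 4))
  refine h.congr_deriv ?_
  symm
  unfold tH
  field_simp
  ring

lemma self_le_cosh2 (y : ℝ) : y ≤ Real.cosh (2 * y) := by
  nlinarith [Real.add_one_le_exp (2 * y), Real.exp_pos (-(2 * y)), Real.cosh_eq (2 * y)]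

lemma abs_le_cosh2 (y : ℝ) : |y| ≤ Real.cosh (2 * y) := by
  have h := self_le_cosh2 |y|
  rwa [show 2 * |y| = |2 * y| by rw [abs_mul]; norm_num, Real.cosh_abs] at h

lemma abs_sinh_le_cosh2 (y : ℝ) : |Real.sinh (2 * y)| ≤ Real.cosh (2 * y) := by
  rw [abs_le]
  constructor <;>
    nlinarith [Real.cosh_add_sinh (2 * y), Real.cosh_sub_sinh (2 * y),
      Real.exp_pos (2 * y), Real.exp_pos (-(2 * y))]

lemma tendsto_cosh2_atTop : Tendsto (fun y => Real.cosh (2 * y)) atTop atTop :=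
  tendsto_atTop_mono self_le_cosh2 tendsto_id

lemma tendsto_inv_cosh2 : Tendsto (fun y => (Real.cosh (2 * y))⁻¹) atTop (𝓝 0) :=
  tendsto_cosh2_atTop.inv_tendsto_atTop

lemma tendsto_sinh2_atTop : Tendsto (fun y => Real.sinh (2 * y)) atTop atTop := by
  refine tendsto_atTop_mono' atTop ?_ tendsto_id
  filter_upwards [eventually_ge_atTop (0:ℝ)] with y hy
  have h1 : Real.exp (-(2 * y)) ≤ 1 := Real.exp_le_one_iff.mpr (by linarith)
  have h2 := Real.add_one_le_exp (2 * y)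
  rw [Real.sinh_eq]
  simp only [id_eq]
  linarith

lemma tendsto_tPhi_atTop :
    Tendsto tPhi atTop (𝓝 (13 * Real.sqrt 3 / 16 * (Real.pi / 2))) := by
  have hb : ∀ (f : ℝ → ℝ) (k : ℕ), (∀ y, |f y| ≤ Real.cosh (2 * y)) → 2 ≤ k →
      Tendsto (fun y => f y / Real.cosh (2 * y) ^ k) atTop (𝓝 0) := by
    intro f k hf hk
    apply squeeze_zero_norm (a := fun y => (Real.cosh (2 * y))⁻¹) _ tendsto_inv_cosh2
    intro y
    have hc : (0:ℝ) < Real.cosh (2 * y) := Real.cosh_pos _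
    have hc1 : (1:ℝ) ≤ Real.cosh (2 * y) := Real.one_le_cosh _
    rw [Real.norm_eq_abs, abs_div, abs_of_pos (pow_pos hc k), div_le_iff₀ (pow_pos hc k)]
    calc |f y| ≤ Real.cosh (2 * y) := hf y
      _ = (Real.cosh (2 * y))⁻¹ * Real.cosh (2 * y) ^ 2 := by field_simp
      _ ≤ (Real.cosh (2 * y))⁻¹ * Real.cosh (2 * y) ^ k := by
          gcongr
  have l1 := hb (fun y => Real.sinh (2 * y)) 2 abs_sinh_le_cosh2 le_rfl
  have l3 := hb (fun y => Real.sinh (2 * y)) 4 abs_sinh_le_cosh2 (by norm_num)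
  have l4 := hb (fun y => y) 3 abs_le_cosh2 (by norm_num)
  have l5 := hb (fun y => y) 5 abs_le_cosh2 (by norm_num)
  have larc : Tendsto (fun y => Real.arctan (Real.sinh (2 * y))) atTop (𝓝 (Real.pi / 2)) :=
    (tendsto_nhds_of_tendsto_nhdsWithin Real.tendsto_arctan_atTop).comp tendsto_sinh2_atTop
  have h := ((((l1.add larc).const_mul (13 * Real.sqrt 3 / 16)).add
      (l3.const_mul (21 * Real.sqrt 3 / 8))).sub
      (l4.const_mul (25 * Real.sqrt 3 / 4))).add
      (l5.const_mul (21 * Real.sqrt 3 / 4))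
  have h2 : Tendsto tPhi atTop
      (𝓝 (13 * Real.sqrt 3 / 16 * (0 + Real.pi / 2) + 21 * Real.sqrt 3 / 8 * 0 -
        25 * Real.sqrt 3 / 4 * 0 + 21 * Real.sqrt 3 / 4 * 0)) :=
    h.congr (fun y => by simp only [tPhi]; try ring)
  convert h2 using 2
  ring

lemma tPhi_odd (y : ℝ) : tPhi (-y) = -tPhi y := by
  unfold tPhi
  rw [show 2 * (-y) = -(2 * y) by ring]
  simp [Real.sinh_neg, Real.cosh_neg, Real.arctan_neg]
  ring

lemma tendsto_tPhi_atBot :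
    Tendsto tPhi atBot (𝓝 (-(13 * Real.sqrt 3 / 16 * (Real.pi / 2)))) := by
  have h := (tendsto_tPhi_atTop.comp tendsto_neg_atBot_atTop).neg
  exact h.congr fun y => by simp [tPhi_odd]

lemma tH_continuous : Continuous tH := by
  have hc : Continuous fun y : ℝ => Real.cosh (2 * y) :=
    Real.continuous_cosh.comp (continuous_const.mul continuous_id)
  have hs : Continuous fun y : ℝ => Real.sinh (2 * y) :=
    Real.continuous_sinh.comp (continuous_const.mul continuous_id)
  have hne : ∀ (n : ℕ) (y : ℝ), Real.cosh (2 * y) ^ n ≠ 0 :=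
    fun n y => pow_ne_zero _ (Real.cosh_pos _).ne'
  unfold tH
  exact continuous_const.mul
    ((((continuous_const.div (hc.pow 3) (hne 3)).add
        (continuous_const.div (hc.pow 5) (hne 5))).add
      (((continuous_const.mul continuous_id).mul hs).div (hc.pow 4) (hne 4))).sub
      (((continuous_const.mul continuous_id).mul hs).div (hc.pow 6) (hne 6)))

lemma tH_bound (y : ℝ) : |tH y| ≤ 450 / Real.cosh (2 * y) ^ 2 := by
  set c := Real.cosh (2 * y) with hcdef
  set s := Real.sinh (2 * y) with hsdef
  have hc : (0:ℝ) < c := Real.cosh_pos _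
  have hc1 : (1:ℝ) ≤ c := Real.one_le_cosh _
  have hys : |y * s| ≤ c ^ 2 := by
    rw [abs_mul, sq]
    exact mul_le_mul (abs_le_cosh2 y) (abs_sinh_le_cosh2 y) (abs_nonneg _)
      ((abs_nonneg y).trans (abs_le_cosh2 y))
  obtain ⟨hys1, hys2⟩ := abs_le.mp hys
  have hsq3 : Real.sqrt 3 ≤ 2 := by
    rw [show (2:ℝ) = Real.sqrt 4 by rw [show (4:ℝ) = 2^2 by norm_num, Real.sqrt_sq]; norm_num]
    exact Real.sqrt_le_sqrt (by norm_num)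
  have hsq0 : (0:ℝ) ≤ Real.sqrt 3 := Real.sqrt_nonneg _
  have hEq : tH y = 15 * Real.sqrt 3 / 2 *
      (-(5/2) * c ^ 3 + 7/2 * c + 5 * (y * s) * c ^ 2 - 7 * (y * s)) / c ^ 6 := by
    unfold tH
    field_simp
    ring
  rw [hEq, abs_div, abs_of_pos (pow_pos hc 6), div_le_div_iff₀ (pow_pos hc 6) (pow_pos hc 2)]
  have h34 : c ^ 3 ≤ c ^ 4 := pow_le_pow_right₀ hc1 (by norm_num)
  have h14 : c ≤ c ^ 4 := by simpa using pow_le_pow_right₀ hc1 (show 1 ≤ 4 by norm_num)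
  have h24 : c ^ 2 ≤ c ^ 4 := pow_le_pow_right₀ hc1 (by norm_num)
  have h46 : c ^ 4 ≤ c ^ 6 := pow_le_pow_right₀ hc1 (by norm_num)
  have hysc : 5 * (y * s) * c ^ 2 ≤ 5 * c ^ 4 := by nlinarith
  have hysc2 : -(5 * c ^ 4) ≤ 5 * (y * s) * c ^ 2 := by nlinarith
  have hM : |(-(5/2) * c ^ 3 + 7/2 * c + 5 * (y * s) * c ^ 2 - 7 * (y * s))| ≤ 18 * c ^ 4 := by
    rw [abs_le]
    constructor <;> nlinarith
  calc |15 * Real.sqrt 3 / 2 * (-(5/2) * c ^ 3 + 7/2 * c + 5 * (y * s) * c ^ 2 - 7 * (y * s))| * c ^ 2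
      = 15 * Real.sqrt 3 / 2 * |(-(5/2) * c ^ 3 + 7/2 * c + 5 * (y * s) * c ^ 2 - 7 * (y * s))| * c ^ 2 := by
        rw [abs_mul, abs_of_nonneg (by positivity : (0:ℝ) ≤ 15 * Real.sqrt 3 / 2)]
    _ ≤ 15 * 2 / 2 * (18 * c ^ 4) * c ^ 2 := by
        have : 15 * Real.sqrt 3 / 2 * |(-(5/2) * c ^ 3 + 7/2 * c + 5 * (y * s) * c ^ 2 - 7 * (y * s))|
            ≤ 15 * 2 / 2 * (18 * c ^ 4) := by
          exact mul_le_mul (by nlinarith) hM (abs_nonneg _) (by norm_num)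
        nlinarith [sq_nonneg c, pow_pos hc 2]
    _ = 270 * c ^ 6 := by ring
    _ ≤ 450 * c ^ 6 := by nlinarith [pow_pos hc 6]

lemma tH_even (y : ℝ) : tH (-y) = tH y := by
  unfold tH
  rw [show 2 * (-y) = -(2 * y) by ring]
  simp only [Real.sinh_neg, Real.cosh_neg]
  ring

lemma tH_integrable : Integrable tH := by
  have hIoi : IntegrableOn tH (Ioi (0:ℝ)) := by
    refine integrable_of_isBigO_exp_neg (a := 0) (b := 4) (by norm_num)
      tH_continuous.continuousOn ?_
    refine Asymptotics.IsBigO.of_bound 1800 ?_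
    filter_upwards [eventually_ge_atTop (0:ℝ)] with y hy
    have hb := tH_bound y
    have hec : Real.exp (2 * y) / 2 ≤ Real.cosh (2 * y) := by
      rw [Real.cosh_eq]
      nlinarith [Real.exp_pos (-(2 * y))]
    have hee : Real.exp (2 * y) * Real.exp (2 * y) = Real.exp (4 * y) := by
      rw [← Real.exp_add]; ring_nf
    have hc2 : Real.exp (4 * y) / 4 ≤ Real.cosh (2 * y) ^ 2 := by
      nlinarith [Real.exp_pos (2 * y), Real.cosh_pos (2 * y)]
    have h2 : 450 / Real.cosh (2 * y) ^ 2 ≤ 1800 * Real.exp (-4 * y) := by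
      rw [div_le_iff₀ (by positivity), show (-4) * y = -(4 * y) by ring, Real.exp_neg,
        mul_assoc]
      have hinv : (0:ℝ) ≤ (Real.exp (4 * y))⁻¹ := by positivity
      have := mul_le_mul_of_nonneg_left hc2 hinv
      have hcancel : (Real.exp (4 * y))⁻¹ * Real.exp (4 * y) = 1 :=
        inv_mul_cancel₀ (Real.exp_ne_zero _)
      nlinarith [Real.cosh_pos (2 * y)]
    rw [Real.norm_eq_abs, Real.norm_eq_abs, abs_of_pos (Real.exp_pos _)]
    exact hb.trans h2
  have hIic : IntegrableOn tH (Iic (0:ℝ)) := by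
    have m : MeasurableEmbedding (fun x : ℝ => -x) :=
      (Homeomorph.neg ℝ).measurableEmbedding
    rw [show (volume : Measure ℝ) = Measure.map (fun x => -x) volume from
      (Measure.map_neg_eq_self (volume : Measure ℝ)).symm, m.integrableOn_map_iff]
    have hset : (fun x : ℝ => -x) ⁻¹' (Iic 0) = Ici 0 := by ext x; simp
    rw [hset, show (tH ∘ fun x : ℝ => -x) = tH from funext fun y => tH_even y]
    exact (integrableOn_Ici_iff_integrableOn_Ioi).mpr hIoi
  rw [← integrableOn_univ, ← Set.Iic_union_Ioi (a := (0:ℝ))]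
  exact hIic.union hIoi

/-- Explicit quintic-term integral of the quintic Townes soliton
`R(y) = 3^(1/4) sech(2y)^(1/2)` against `G(y) = -(1/2)(R(y)/2 + y R'(y))`:
`∫ (R⁵)'' · G = (13√3/16)π`. -/
theorem townes_quintic_term_integral (R G : ℝ → ℝ)
    (hR : ∀ y : ℝ, R y = 3 ^ ((1 : ℝ) / 4) * (1 / Real.cosh (2 * y)) ^ ((1 : ℝ) / 2))
    (hG : ∀ y : ℝ, G y = -(1 / 2) * (R y / 2 + y * deriv R y)) :
    ∫ y : ℝ, deriv (deriv (fun z => R z ^ 5)) y * G y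
      = 13 * Real.sqrt 3 / 16 * Real.pi := by
  have hc : ∀ y : ℝ, (0:ℝ) < Real.cosh (2 * y) := fun y => Real.cosh_pos _
  have hRfun : R = fun y => (3:ℝ) ^ ((1:ℝ)/4) * Real.cosh (2 * y) ^ (-(1:ℝ)/2) := by
    funext y
    rw [hR y, one_div (Real.cosh (2 * y)), Real.inv_rpow (hc y).le, ← Real.rpow_neg (hc y).le,
      show -((1:ℝ)/2) = -(1:ℝ)/2 by norm_num]
  have hdRat : ∀ y : ℝ, HasDerivAt (fun y => (3:ℝ) ^ ((1:ℝ)/4) * Real.cosh (2 * y) ^ (-(1:ℝ)/2))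
      (-(3:ℝ) ^ ((1:ℝ)/4) * (Real.sinh (2 * y) * Real.cosh (2 * y) ^ (-(3:ℝ)/2))) y := by
    intro y
    have h := ((hasDerivAt_cosh2 y).rpow_const (p := -(1:ℝ)/2) (Or.inl (hc y).ne')).const_mul
      ((3:ℝ) ^ ((1:ℝ)/4))
    refine h.congr_deriv ?_
    symm
    rw [show (-(1:ℝ)/2 - 1) = -(3:ℝ)/2 by norm_num]
    ring
  have hG' : ∀ y : ℝ, G y = -(1/2) * ((3:ℝ) ^ ((1:ℝ)/4) * Real.cosh (2 * y) ^ (-(1:ℝ)/2) / 2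
      + y * (-(3:ℝ) ^ ((1:ℝ)/4) * (Real.sinh (2 * y) * Real.cosh (2 * y) ^ (-(3:ℝ)/2)))) := by
    intro y
    rw [hG y, hRfun, (hdRat y).deriv]
  have hfun5 : (fun z => R z ^ 5)
      = fun z => (3:ℝ) ^ ((5:ℝ)/4) * Real.cosh (2 * z) ^ (-(5:ℝ)/2) := by
    funext z
    rw [hRfun]
    rw [mul_pow, ← Real.rpow_natCast ((3:ℝ) ^ ((1:ℝ)/4)) 5,
      ← Real.rpow_natCast (Real.cosh (2 * z) ^ (-(1:ℝ)/2)) 5,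
      ← Real.rpow_mul (by norm_num : (0:ℝ) ≤ 3), ← Real.rpow_mul (hc z).le]
    norm_num
  have hf1 : ∀ y : ℝ, HasDerivAt (fun z => (3:ℝ) ^ ((5:ℝ)/4) * Real.cosh (2 * z) ^ (-(5:ℝ)/2))
      (-5 * (3:ℝ) ^ ((5:ℝ)/4) * (Real.sinh (2 * y) * Real.cosh (2 * y) ^ (-(7:ℝ)/2))) y := by
    intro y
    have h := ((hasDerivAt_cosh2 y).rpow_const (p := -(5:ℝ)/2) (Or.inl (hc y).ne')).const_mul
      ((3:ℝ) ^ ((5:ℝ)/4))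
    refine h.congr_deriv ?_
    symm
    rw [show (-(5:ℝ)/2 - 1) = -(7:ℝ)/2 by norm_num]
    ring
  have hd1 : deriv (fun z => (3:ℝ) ^ ((5:ℝ)/4) * Real.cosh (2 * z) ^ (-(5:ℝ)/2))
      = fun y => -5 * (3:ℝ) ^ ((5:ℝ)/4) * (Real.sinh (2 * y) * Real.cosh (2 * y) ^ (-(7:ℝ)/2)) :=
    funext fun y => (hf1 y).deriv
  have hf2 : ∀ y : ℝ, HasDerivAt
      (fun w => -5 * (3:ℝ) ^ ((5:ℝ)/4) * (Real.sinh (2 * w) * Real.cosh (2 * w) ^ (-(7:ℝ)/2)))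
      (-5 * (3:ℝ) ^ ((5:ℝ)/4) * (2 * Real.cosh (2 * y) * Real.cosh (2 * y) ^ (-(7:ℝ)/2)
        + Real.sinh (2 * y) * (2 * Real.sinh (2 * y) * (-(7:ℝ)/2)
          * Real.cosh (2 * y) ^ (-(9:ℝ)/2)))) y := by
    intro y
    have hcc := (hasDerivAt_cosh2 y).rpow_const (p := -(7:ℝ)/2) (Or.inl (hc y).ne')
    have h := ((hasDerivAt_sinh2 y).mul hcc).const_mul (-5 * (3:ℝ) ^ ((5:ℝ)/4))
    refine h.congr_deriv ?_
    symm
    rw [show (-(7:ℝ)/2 - 1) = -(9:ℝ)/2 by norm_num]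
  rw [hfun5]
  have hkey : ∀ y : ℝ,
      deriv (deriv (fun z => (3:ℝ) ^ ((5:ℝ)/4) * Real.cosh (2 * z) ^ (-(5:ℝ)/2))) y * G y
        = tH y := by
    intro y
    rw [hd1, (hf2 y).deriv, hG' y]
    have hm : ∀ (p q : ℝ) (n : ℕ), p + q = -(n:ℝ) →
        Real.cosh (2 * y) ^ p * Real.cosh (2 * y) ^ q = (Real.cosh (2 * y) ^ n)⁻¹ := by
      intro p q n h
      rw [← Real.rpow_add (hc y), h, Real.rpow_neg (hc y).le, Real.rpow_natCast]
    have e41 := hm (-(7:ℝ)/2) (-(1:ℝ)/2) 4 (by norm_num)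
    have e51 := hm (-(7:ℝ)/2) (-(3:ℝ)/2) 5 (by norm_num)
    have e52 := hm (-(9:ℝ)/2) (-(1:ℝ)/2) 5 (by norm_num)
    have e61 := hm (-(9:ℝ)/2) (-(3:ℝ)/2) 6 (by norm_num)
    have h3 : (3:ℝ) ^ ((5:ℝ)/4) * (3:ℝ) ^ ((1:ℝ)/4) = 3 * Real.sqrt 3 := by
      rw [← Real.rpow_add (by norm_num : (0:ℝ) < 3), Real.sqrt_eq_rpow,
        show (5:ℝ)/4 + 1/4 = 1 + 1/2 by norm_num,
        Real.rpow_add (by norm_num : (0:ℝ) < 3), Real.rpow_one]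
    have key : Real.sinh (2 * y) ^ 2 = Real.cosh (2 * y) ^ 2 - 1 := Real.sinh_sq _
    calc -5 * (3:ℝ) ^ ((5:ℝ)/4) * (2 * Real.cosh (2 * y) * Real.cosh (2 * y) ^ (-(7:ℝ)/2)
          + Real.sinh (2 * y) * (2 * Real.sinh (2 * y) * (-(7:ℝ)/2)
            * Real.cosh (2 * y) ^ (-(9:ℝ)/2)))
        * (-(1/2) * ((3:ℝ) ^ ((1:ℝ)/4) * Real.cosh (2 * y) ^ (-(1:ℝ)/2) / 2
          + y * (-(3:ℝ) ^ ((1:ℝ)/4) * (Real.sinh (2 * y) * Real.cosh (2 * y) ^ (-(3:ℝ)/2)))))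
        = 5 * ((3:ℝ) ^ ((5:ℝ)/4) * (3:ℝ) ^ ((1:ℝ)/4)) / 2 *
          (Real.cosh (2 * y)
              * (Real.cosh (2 * y) ^ (-(7:ℝ)/2) * Real.cosh (2 * y) ^ (-(1:ℝ)/2))
            - 2 * y * Real.sinh (2 * y) * Real.cosh (2 * y)
              * (Real.cosh (2 * y) ^ (-(7:ℝ)/2) * Real.cosh (2 * y) ^ (-(3:ℝ)/2))
            - 7/2 * Real.sinh (2 * y) ^ 2
              * (Real.cosh (2 * y) ^ (-(9:ℝ)/2) * Real.cosh (2 * y) ^ (-(1:ℝ)/2))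
            + 7 * y * Real.sinh (2 * y) * Real.sinh (2 * y) ^ 2
              * (Real.cosh (2 * y) ^ (-(9:ℝ)/2) * Real.cosh (2 * y) ^ (-(3:ℝ)/2))) := by
          ring
      _ = tH y := by
          rw [e41, e51, e52, e61, h3, key]
          unfold tH
          field_simp
          ring
  rw [show (fun y => deriv (deriv fun z => (3:ℝ) ^ ((5:ℝ)/4) * Real.cosh (2 * z) ^ (-(5:ℝ)/2)) y * G y) = tH
    from funext hkey]
  rw [integral_of_hasDerivAt_of_tendsto tPhi_hasDerivAt tH_integrable
    tendsto_tPhi_atBot tendsto_tPhi_atTop]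
  ring
end
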